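/- For ζ₀ ∈ ℂ with η₀ = Im ζ₀ < 0 and h > 0, the following chain of inequalities holds: |1 − iζ₀h|² ≤ −2η₀h / log|(1+iζ₀h)/(1−iζ₀h)| ≤ |1 + iζ₀h|². -/

import Mathlib

lemma log_ratio_aux (a b : ℝ) (hb : 0 < b) (hab : b < a) :
    b ≤ (a - b) / Real.log (a / b) ∧ (a - b) / Real.log (a / b) ≤ a := by
  have ha : 0 < a := hb.trans hab
  have h1 : 1 < a / b := (one_lt_div hb).2 hab
  have hL : 0 < Real.log (a / b) := Real.log_pos h1
  constructor
  · rw [le_div_iff₀ hL]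
    have h2 : Real.log (a / b) ≤ a / b - 1 := Real.log_le_sub_one_of_pos (by positivity)
    have h3 : b * (a / b - 1) = a - b := by field_simp
    nlinarith
  · rw [div_le_iff₀ hL]
    have h2 : Real.log (b / a) ≤ b / a - 1 := Real.log_le_sub_one_of_pos (by positivity)
    have h3 : Real.log (b / a) = - Real.log (a / b) := by
      rw [← Real.log_inv]; congr 1; field_simp
    have h4 : a * (b / a - 1) = b - a := by field_simp
    nlinarith

theorem log_ratio_bounds (ζ₀ : ℂ) (hζ : ζ₀.im < 0) (h : ℝ) (hh : 0 < h) :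
    ‖(1 - Complex.I * ζ₀ * h : ℂ)‖ ^ 2
      ≤ (-2 * ζ₀.im * h)
          / Real.log ‖((1 + Complex.I * ζ₀ * h) / (1 - Complex.I * ζ₀ * h) : ℂ)‖
    ∧ (-2 * ζ₀.im * h)
          / Real.log ‖((1 + Complex.I * ζ₀ * h) / (1 - Complex.I * ζ₀ * h) : ℂ)‖
      ≤ ‖(1 + Complex.I * ζ₀ * h : ℂ)‖ ^ 2 := by
  set t : ℂ := Complex.I * ζ₀ * h with ht
  have hA2 : ‖1 + t‖ ^ 2 = (1 - ζ₀.im * h) ^ 2 + (ζ₀.re * h) ^ 2 := by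
    rw [Complex.sq_norm, Complex.normSq_apply]
    simp [ht, Complex.mul_re, Complex.mul_im]
    ring
  have hB2 : ‖1 - t‖ ^ 2 = (1 + ζ₀.im * h) ^ 2 + (ζ₀.re * h) ^ 2 := by
    rw [Complex.sq_norm, Complex.normSq_apply]
    simp [ht, Complex.mul_re, Complex.mul_im]
    ring
  have hdiff : ‖1 + t‖ ^ 2 - ‖1 - t‖ ^ 2 = -4 * ζ₀.im * h := by
    rw [hA2, hB2]; ring
  have hAsq : 0 < ‖1 + t‖ ^ 2 := by
    rw [hA2]; nlinarith [sq_nonneg (ζ₀.re * h), mul_pos (neg_pos.2 hζ) hh]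
  by_cases hB : (1 : ℂ) - t = 0
  · rw [hB]
    simp only [div_zero, norm_zero, Real.log_zero, ne_eq, pow_eq_zero_iff]
    norm_num
  · have hBpos : 0 < ‖1 - t‖ := norm_pos_iff.mpr hB
    have hd : 0 < -4 * ζ₀.im * h := by nlinarith
    have hBA : ‖1 - t‖ ^ 2 < ‖1 + t‖ ^ 2 := by linarith
    rw [norm_div]
    have key := log_ratio_aux (‖1 + t‖ ^ 2) (‖1 - t‖ ^ 2)
      (by positivity) hBA
    have hlog : Real.log (‖1 + t‖ ^ 2 / ‖1 - t‖ ^ 2)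
        = 2 * Real.log (‖1 + t‖ / ‖1 - t‖) := by
      rw [← div_pow, Real.log_pow]; norm_num
    have heq : (-2 * ζ₀.im * h) / Real.log (‖1 + t‖ / ‖1 - t‖)
        = (‖1 + t‖ ^ 2 - ‖1 - t‖ ^ 2)
          / Real.log (‖1 + t‖ ^ 2 / ‖1 - t‖ ^ 2) := by
      rw [hdiff, hlog, show (-4 : ℝ) * ζ₀.im * h = 2 * (-2 * ζ₀.im * h) by ring,
        mul_div_mul_left _ _ (two_ne_zero)]
    rw [heq]
    exact key
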